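/- Let r ≥ 4 and let G be a graph on n vertices (n sufficiently large) with δ(G) ≥ ⌊n/2⌋ + (r-3). If there exists A ⊆ V(G) with |A| = ⌊n/2⌋ - 1 and ⟨A⟩_r = A, then m(G, r) = r. -/

import Mathlib

open Finset

open scoped Classical

noncomputable section

variable {V : Type*}

/-- Number of neighbours of `v` inside the set `A`. -/
def nbrsIn (G : SimpleGraph V) (A : Finset V) (v : V) : ℕ :=
  (A.filter (fun u => G.Adj v u)).card

/-- One step of the `r`-neighbour bootstrap process. -/
def bootStep [Fintype V] (G : SimpleGraph V) (r : ℕ) (A : Finset V) : Finset V :=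
  A ∪ Finset.univ.filter (fun v => r ≤ nbrsIn G A v)

/-- The sets `A_t` of the `r`-neighbour bootstrap process started at `A`. -/
def bootSeq [Fintype V] (G : SimpleGraph V) (r : ℕ) (A : Finset V) : ℕ → Finset V
  | 0 => A
  | t + 1 => bootStep G r (bootSeq G r A t)

/-- `A` is closed under the `r`-neighbour bootstrap rule. -/
def BootClosed (G : SimpleGraph V) (r : ℕ) (A : Finset V) : Prop :=
  ∀ v, r ≤ nbrsIn G A v → v ∈ A

/-- The `r`-neighbour bootstrap closure `⟨A⟩_r`: the smallest closed superset of `A`. -/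
def bootClosure [Fintype V] (G : SimpleGraph V) (r : ℕ) (A : Finset V) : Finset V :=
  Finset.univ.filter (fun v => ∀ B : Finset V, A ⊆ B → BootClosed G r B → v ∈ B)

/-- `m(G, r)`: the minimum size of a percolating set. -/
def minPerc [Fintype V] (G : SimpleGraph V) (r : ℕ) : ℕ :=
  sInf {k | ∃ A : Finset V, A.card = k ∧ bootClosure G r A = Finset.univ}

end

section Aux

variable {V : Type*} [Fintype V] (G : SimpleGraph V)

lemma nbrsIn_mono {A B : Finset V} (h : A ⊆ B) (v : V) :
    nbrsIn G A v ≤ nbrsIn G B v :=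
  Finset.card_le_card (Finset.filter_subset_filter _ h)

lemma nbrsIn_le_card (A : Finset V) (v : V) : nbrsIn G A v ≤ A.card :=
  Finset.card_le_card (Finset.filter_subset _ _)

lemma subset_bootClosure (r : ℕ) (A : Finset V) : A ⊆ bootClosure G r A := by
  intro x hx
  simp only [bootClosure, mem_filter, mem_univ, true_and]
  exact fun B hAB _ => hAB hx

lemma bootClosure_closed (r : ℕ) (A : Finset V) :
    BootClosed G r (bootClosure G r A) := by
  intro v hv
  simp only [bootClosure, mem_filter, mem_univ, true_and]
  intro B hAB hB
  have hsub : bootClosure G r A ⊆ B := by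
    intro x hx
    simp only [bootClosure, mem_filter, mem_univ, true_and] at hx
    exact hx B hAB hB
  exact hB v (le_trans hv (nbrsIn_mono G hsub v))

lemma bootClosure_of_closed {r : ℕ} {A : Finset V} (h : BootClosed G r A) :
    bootClosure G r A = A := by
  apply Finset.Subset.antisymm
  · intro v hv
    simp only [bootClosure, mem_filter, mem_univ, true_and] at hv
    exact hv A Finset.Subset.rfl h
  · exact subset_bootClosure G r A

end Aux

theorem stmt_15 (r : ℕ) (hr : 4 ≤ r) :
    ∃ N : ℕ, ∀ n : ℕ, N ≤ n → ∀ G : SimpleGraph (Fin n),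
      n / 2 + (r - 3) ≤ G.minDegree →
      ∀ A : Finset (Fin n), A.card = n / 2 - 1 → bootClosure G r A = A →
        minPerc G r = r := by
  refine ⟨40 * r + 40, fun n hn G hδ A hAcard hAclosure => ?_⟩
  set k := n / 2 with hkdef
  have hk : 20 * r + 20 ≤ k := by omega
  have hn2 : 2 * k ≤ n ∧ n ≤ 2 * k + 1 := by omega
  -- B is the complement of A
  set B : Finset (Fin n) := Finset.univ \ A with hBdef
  have hBcard : B.card = n - (k - 1) := by
    rw [hBdef, Finset.card_sdiff_of_subset (Finset.subset_univ A), hAcard]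
    simp
  have hABunion : A ∪ B = Finset.univ := Finset.union_sdiff_of_subset (Finset.subset_univ A)
  have hABdisj : Disjoint A B := Finset.disjoint_sdiff
  -- A is closed
  have hclosed : BootClosed G r A := hAclosure ▸ bootClosure_closed G r A
  -- degree decomposition
  have hdeg : ∀ v : Fin n, k + (r - 3) ≤ nbrsIn G A v + nbrsIn G B v := by
    intro v
    have h1 : k + (r - 3) ≤ G.degree v := le_trans hδ (G.minDegree_le_degree v)
    have h2 : nbrsIn G A v + nbrsIn G B v = G.degree v := by
      rw [nbrsIn, nbrsIn, ← Finset.card_union_of_disjoint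
        (Finset.disjoint_filter_filter hABdisj), ← Finset.filter_union, hABunion]
      rw [SimpleGraph.degree]
      congr 1
      ext u
      simp [SimpleGraph.mem_neighborFinset]
    omega
  -- vertices of B have few neighbours in A
  have hb1 : ∀ b ∈ B, nbrsIn G A b ≤ r - 1 := by
    intro b hb
    by_contra hcon
    have : b ∈ A := hclosed b (by omega)
    simp [hBdef, Finset.mem_sdiff] at hb
    exact hb this
  -- vertices of B have many neighbours in B
  have hb2 : ∀ b ∈ B, k - 2 ≤ nbrsIn G B b := by
    intro b hb
    have := hdeg b
    have := hb1 b hb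
    omega
  -- vertices of B have at most 4 non-neighbours within B (counting themselves)
  have hb4 : ∀ b ∈ B, (B.filter (fun u => ¬ G.Adj b u)).card ≤ 4 := by
    intro b hb
    have hsplit : (B.filter (fun u => G.Adj b u)).card
        + (B.filter (fun u => ¬ G.Adj b u)).card = B.card :=
      Finset.card_filter_add_card_filter_not _
    have h2 := hb2 b hb
    rw [nbrsIn] at h2
    omega
  -- vertices of A have at most |A| - 1 = k - 2 neighbours inside A
  have hAself : ∀ v ∈ A, nbrsIn G A v ≤ k - 2 := by
    intro v hv
    have hsub : A.filter (fun u => G.Adj v u) ⊆ A.erase v := by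
      intro u hu
      rw [Finset.mem_filter] at hu
      exact Finset.mem_erase.2 ⟨(hu.2.ne).symm, hu.1⟩
    have := Finset.card_le_card hsub
    rw [Finset.card_erase_of_mem hv, hAcard] at this
    rw [nbrsIn]
    omega
  -- hence every vertex of A has at least r - 1 neighbours in B
  have hAB' : ∀ v ∈ A, r - 1 ≤ nbrsIn G B v := by
    intro v hv
    have := hdeg v
    have := hAself v hv
    omega
  -- double counting: find a ∈ A with exactly r - 1 neighbours in B
  have hsum : ∑ a ∈ A, nbrsIn G B a = ∑ b ∈ B, nbrsIn G A b := by
    simp only [nbrsIn, Finset.card_filter]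
    rw [Finset.sum_comm]
    refine Finset.sum_congr rfl (fun b _ => Finset.sum_congr rfl (fun a _ => ?_))
    rw [G.adj_comm]
  have hexa : ∃ a ∈ A, nbrsIn G B a ≤ r - 1 := by
    by_contra hcon
    push_neg at hcon
    have hlow : r * A.card ≤ ∑ a ∈ A, nbrsIn G B a := by
      calc r * A.card = A.card * r := by ring
      _ ≤ ∑ a ∈ A, nbrsIn G B a :=
        Finset.card_nsmul_le_sum A _ r (fun a ha => by have := hcon a ha; omega)
    have hhigh : ∑ b ∈ B, nbrsIn G A b ≤ B.card * (r - 1) :=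
      Finset.sum_le_card_nsmul B _ (r - 1) (fun b hb => hb1 b hb)
    rw [hsum] at hlow
    have h1 : r * (k - 1) ≤ (n - (k - 1)) * (r - 1) := by
      have := le_trans hlow hhigh
      rwa [hAcard, hBcard] at this
    have h2 : n - (k - 1) ≤ k + 2 := by omega
    have h3 : r * (k - 1) ≤ (k + 2) * (r - 1) :=
      le_trans h1 (Nat.mul_le_mul_right _ h2)
    obtain ⟨t, rfl⟩ : ∃ t, r = t + 1 := ⟨r - 1, by omega⟩
    obtain ⟨p, hp⟩ : ∃ p, k = p + 1 := ⟨k - 1, by omega⟩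
    rw [hp] at h3 hk
    simp only [Nat.add_sub_cancel] at h3
    nlinarith [h3, hk]
  obtain ⟨a, haA, haB⟩ := hexa
  have haBeq : nbrsIn G B a = r - 1 := le_antisymm haB (hAB' a haA)
  -- a is adjacent to everything else in A
  have haAeq : A.filter (fun u => G.Adj a u) = A.erase a := by
    apply Finset.eq_of_subset_of_card_le
    · intro u hu
      rw [Finset.mem_filter] at hu
      exact Finset.mem_erase.2 ⟨(hu.2.ne).symm, hu.1⟩
    · rw [Finset.card_erase_of_mem haA, hAcard]
      have h1 := hdeg a
      have h2 : nbrsIn G A a = (A.filter (fun u => G.Adj a u)).card := rfl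
      omega
  have haAall : ∀ v ∈ A, v ≠ a → G.Adj a v := by
    intro v hv hne
    have : v ∈ A.erase a := Finset.mem_erase.2 ⟨hne, hv⟩
    rw [← haAeq, Finset.mem_filter] at this
    exact this.2
  -- the B-neighbourhood of a
  set Nba : Finset (Fin n) := B.filter (fun u => G.Adj a u) with hNbadef
  have hNbacard : Nba.card = r - 1 := haBeq
  -- forbidden set: Nba together with all B-vertices having a non-neighbour in Nba
  set F : Finset (Fin n) := B.filter (fun b => ∃ v ∈ Nba, ¬ G.Adj v b) with hFdef
  have hNbaF : Nba ⊆ F := by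
    intro v hv
    rw [hFdef, Finset.mem_filter]
    rw [hNbadef, Finset.mem_filter] at hv
    exact ⟨hv.1, v, by rw [hNbadef, Finset.mem_filter]; exact hv, G.irrefl⟩
  have hFcard : F.card ≤ (r - 1) * 4 := by
    have hsub : F ⊆ Nba.biUnion (fun v => B.filter (fun b => ¬ G.Adj v b)) := by
      intro b hb
      rw [hFdef, Finset.mem_filter] at hb
      obtain ⟨v, hvN, hvb⟩ := hb.2
      exact Finset.mem_biUnion.2 ⟨v, hvN, Finset.mem_filter.2 ⟨hb.1, hvb⟩⟩
    calc F.card ≤ ∑ v ∈ Nba, (B.filter (fun b => ¬ G.Adj v b)).card :=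
          le_trans (Finset.card_le_card hsub) (Finset.card_biUnion_le)
      _ ≤ Nba.card * 4 := Finset.sum_le_card_nsmul _ _ 4
          (fun v hv => hb4 v (by rw [hNbadef, Finset.mem_filter] at hv; exact hv.1))
      _ = (r - 1) * 4 := by rw [hNbacard]
  -- choose Sb ⊆ B \ F of size r - 1
  have hBFbig : r - 1 ≤ (B \ F).card := by
    have := Finset.le_card_sdiff F B
    have hFB : F ⊆ B := Finset.filter_subset _ _
    have := Finset.card_le_card hFB
    omega
  obtain ⟨Sb, hSbsub, hSbcard⟩ := Finset.exists_subset_card_eq hBFbig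
  have hSbB : Sb ⊆ B := fun x hx => (Finset.mem_sdiff.1 (hSbsub hx)).1
  have hSbF : ∀ x ∈ Sb, x ∉ F := fun x hx => (Finset.mem_sdiff.1 (hSbsub hx)).2
  have haSb : a ∉ Sb := by
    intro h
    have : a ∈ B := hSbB h
    rw [hBdef, Finset.mem_sdiff] at this
    exact this.2 haA
  set S : Finset (Fin n) := insert a Sb with hSdef
  have hScard : S.card = r := by
    rw [hSdef, Finset.card_insert_of_notMem haSb, hSbcard]
    omega
  -- adjacency of Nba vertices to Sb vertices
  have hNbaSb : ∀ v ∈ Nba, ∀ b ∈ Sb, G.Adj v b := by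
    intro v hv b hb
    by_contra hcon
    exact hSbF b hb (Finset.mem_filter.2 ⟨hSbB hb, v, hv, hcon⟩)
  -- main percolation argument
  have main : ∀ C : Finset (Fin n), S ⊆ C → BootClosed G r C → ∀ v : Fin n, v ∈ C := by
    intro C hSC hC
    have haC : a ∈ C := hSC (Finset.mem_insert_self a Sb)
    -- step 1: Nba ⊆ C
    have step1 : Nba ⊆ C := by
      intro v hv
      apply hC
      have hfilt : S.filter (fun u => G.Adj v u) = S := by
        apply Finset.filter_true_of_mem
        intro u hu
        rw [hSdef, Finset.mem_insert] at hu
        rcases hu with rfl | hu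
        · exact ((Finset.mem_filter.1 hv).2).symm
        · exact hNbaSb v hv u hu
      have : nbrsIn G S v = r := by rw [nbrsIn, hfilt, hScard]
      have := nbrsIn_mono G hSC v
      omega
    -- T1 = Sb ∪ Nba, a set of 2(r-1) infected vertices in B
    set T1 : Finset (Fin n) := Sb ∪ Nba with hT1def
    have hT1C : T1 ⊆ C := Finset.union_subset (le_trans (Finset.subset_insert a Sb) hSC) step1
    have hT1B : T1 ⊆ B := Finset.union_subset hSbB (Finset.filter_subset _ _)
    have hT1card : T1.card = (r - 1) + (r - 1) := by
      rw [hT1def, Finset.card_union_of_disjoint, hSbcard, hNbacard]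
      exact Finset.disjoint_left.2 (fun x hx hx' => hSbF x hx (hNbaF hx'))
    -- step 2: W = vertices of B adjacent to all of T1
    set W : Finset (Fin n) := B.filter (fun v => ∀ t ∈ T1, G.Adj v t) with hWdef
    have step2 : W ⊆ C := by
      intro v hv
      rw [hWdef, Finset.mem_filter] at hv
      apply hC
      have hfilt : T1.filter (fun u => G.Adj v u) = T1 :=
        Finset.filter_true_of_mem (fun t ht => hv.2 t ht)
      have h1 : nbrsIn G T1 v = (r - 1) + (r - 1) := by rw [nbrsIn, hfilt, hT1card]
      have := nbrsIn_mono G hT1C v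
      omega
    have hWcard : B.card - (((r - 1) + (r - 1)) * 4) ≤ W.card := by
      have hsub : B \ W ⊆ T1.biUnion (fun t => B.filter (fun u => ¬ G.Adj t u)) := by
        intro v hv
        rw [Finset.mem_sdiff, hWdef, Finset.mem_filter] at hv
        have hvB := hv.1
        have : ∃ t ∈ T1, ¬ G.Adj v t := by
          by_contra hcon
          push_neg at hcon
          exact hv.2 ⟨hvB, hcon⟩
        obtain ⟨t, htT, htv⟩ := this
        refine Finset.mem_biUnion.2 ⟨t, htT, Finset.mem_filter.2 ⟨hvB, ?_⟩⟩
        rw [G.adj_comm]; exact htv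
      have h1 : (B \ W).card ≤ ((r - 1) + (r - 1)) * 4 := by
        calc (B \ W).card ≤ ∑ t ∈ T1, (B.filter (fun u => ¬ G.Adj t u)).card :=
              le_trans (Finset.card_le_card hsub) Finset.card_biUnion_le
          _ ≤ T1.card * 4 := Finset.sum_le_card_nsmul _ _ 4 (fun t ht => hb4 t (hT1B ht))
          _ = ((r - 1) + (r - 1)) * 4 := by rw [hT1card]
      have hWB : W ⊆ B := Finset.filter_subset _ _
      have h2 : (B \ W).card = B.card - W.card := Finset.card_sdiff_of_subset hWB
      have := Finset.card_le_card hWB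
      omega
    -- step 3: all of B is infected
    have step3 : B ⊆ C := by
      intro v hv
      apply hC
      have hWB : W ⊆ B := Finset.filter_subset _ _
      have hsplit : (W.filter (fun u => G.Adj v u)).card
          + (W.filter (fun u => ¬ G.Adj v u)).card = W.card :=
        Finset.card_filter_add_card_filter_not _
      have hmiss : (W.filter (fun u => ¬ G.Adj v u)).card
          ≤ (B.filter (fun u => ¬ G.Adj v u)).card :=
        Finset.card_le_card (Finset.filter_subset_filter _ hWB)
      have h4 := hb4 v hv
      have hWC := nbrsIn_mono G step2 v
      simp only [nbrsIn] at hWC ⊢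
      have hBbig : k + 1 ≤ B.card := by omega
      have hnW := hWcard
      omega
    -- step 4: all of A is infected
    have step4 : A ⊆ C := by
      intro v hv
      by_cases hva : v = a
      · exact hva ▸ haC
      · apply hC
        have hBv := hAB' v hv
        have hsub : insert a (B.filter (fun u => G.Adj v u)) ⊆ C.filter (fun u => G.Adj v u) := by
          intro u hu
          rw [Finset.mem_insert] at hu
          rcases hu with rfl | hu
          · exact Finset.mem_filter.2 ⟨haC, (haAall v hv hva).symm⟩
          · rw [Finset.mem_filter] at hu ⊢
            exact ⟨step3 hu.1, hu.2⟩
        have hanb : a ∉ B.filter (fun u => G.Adj v u) := by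
          intro h
          have : a ∈ B := (Finset.mem_filter.1 h).1
          rw [hBdef, Finset.mem_sdiff] at this
          exact this.2 haA
        have := Finset.card_le_card hsub
        rw [Finset.card_insert_of_notMem hanb] at this
        rw [nbrsIn] at hBv ⊢
        omega
    intro v
    have : v ∈ A ∪ B := hABunion ▸ Finset.mem_univ v
    rcases Finset.mem_union.1 this with h | h
    · exact step4 h
    · exact step3 h
  -- S percolates
  have hSperc : bootClosure G r S = Finset.univ := by
    apply Finset.eq_univ_of_forall
    intro v
    simp only [bootClosure, Finset.mem_filter, Finset.mem_univ, true_and]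
    exact fun C hSC hC => main C hSC hC v
  -- conclude minPerc = r
  have hrmem : r ∈ {m | ∃ A : Finset (Fin n), A.card = m ∧ bootClosure G r A = Finset.univ} :=
    ⟨S, hScard, hSperc⟩
  have hle : minPerc G r ≤ r := Nat.sInf_le hrmem
  have hge : r ≤ minPerc G r := by
    have hne : {m | ∃ A : Finset (Fin n), A.card = m ∧
        bootClosure G r A = Finset.univ}.Nonempty := ⟨r, hrmem⟩
    obtain ⟨T, hTcard, hTperc⟩ := Nat.sInf_mem hne
    rw [minPerc]
    by_contra hcon
    push_neg at hcon
    have hTclosed : BootClosed G r T := by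
      intro v hv
      have := nbrsIn_le_card G T v
      omega
    rw [bootClosure_of_closed G hTclosed] at hTperc
    have : T.card = n := by rw [hTperc, Finset.card_univ, Fintype.card_fin]
    omega
  omega
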